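/- Let A be the adjacency matrix of a finite simple undirected graph on N vertices and let A1 be the off-diagonal part of the symmetrically normalized adjacency matrix with added self-loops. Then the powers of A1 converge to the zero matrix: lim_{L → ∞} A1^L = 0 (entrywise). -/

import Mathlib

open Matrix Finset Filter

/-- The powers of `A1` converge (entrywise) to the zero matrix,
where `A1` is the off-diagonal part of the symmetrically normalized adjacency
matrix with added self-loops. -/
theorem gtnet_A1_pow_tendsto_zero
    (N : ℕ) (A : Matrix (Fin N) (Fin N) ℝ)
    (hsymm : A.IsSymm)
    (h01 : ∀ i j, A i j = 0 ∨ A i j = 1)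
    (hdiag : ∀ i, A i i = 0)
    (d : Fin N → ℝ) (hd : ∀ i, d i = ∑ j, A i j)
    (A1 : Matrix (Fin N) (Fin N) ℝ)
    (hA1 : ∀ i j, A1 i j =
      if i = j then 0 else A i j / Real.sqrt ((d i + 1) * (d j + 1))) :
    Tendsto (fun L : ℕ => A1 ^ L) atTop (nhds 0) := by
  rcases Nat.eq_zero_or_pos N with hN | hN
  · subst hN
    have h0 : ∀ L : ℕ, A1 ^ L = 0 := by
      intro L
      ext i j
      exact i.elim0
    simp only [h0]
    exact tendsto_const_nhds
  · have hne : Nonempty (Fin N) := ⟨⟨0, hN⟩⟩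
    have hA0 : ∀ i j, 0 ≤ A i j := fun i j => by rcases h01 i j with h | h <;> simp [h]
    have hd0 : ∀ i, (0:ℝ) ≤ d i := fun i => by
      rw [hd]; exact Finset.sum_nonneg fun j _ => hA0 i j
    have hd1 : ∀ i, (0:ℝ) < d i + 1 := fun i => by linarith [hd0 i]
    have hs : ∀ i, (0:ℝ) < Real.sqrt (d i + 1) := fun i => Real.sqrt_pos.mpr (hd1 i)
    set r : ℝ := Finset.univ.sup' Finset.univ_nonempty (fun i => d i / (d i + 1)) with hr
    have hrle : ∀ i, d i / (d i + 1) ≤ r := fun i => by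
      rw [hr]; exact Finset.le_sup' (fun i => d i / (d i + 1)) (Finset.mem_univ i)
    have hr0 : 0 ≤ r := by
      obtain ⟨i⟩ := hne
      exact le_trans (div_nonneg (hd0 i) (hd1 i).le) (hrle i)
    have hr1 : r < 1 := by
      rw [hr]
      exact (Finset.sup'_lt_iff Finset.univ_nonempty).mpr fun i _ => (div_lt_one (hd1 i)).mpr (by linarith [hd0 i])
    have hrow : ∀ i, ∑ k, |A1 i k| * Real.sqrt (d k + 1) ≤ r * Real.sqrt (d i + 1) := by
      intro i
      have hterm : ∀ k, |A1 i k| * Real.sqrt (d k + 1) = A i k / Real.sqrt (d i + 1) := by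
        intro k
        rcases eq_or_ne i k with h | h
        · subst h; rw [hA1]; simp [hdiag i]
        · rw [hA1 i k, if_neg h, Real.sqrt_mul (hd1 i).le,
            abs_of_nonneg (div_nonneg (hA0 i k) (by positivity))]
          field_simp
          exact mul_div_mul_right _ _ (hs k).ne'
      simp_rw [hterm]
      rw [← Finset.sum_div, ← hd i, div_le_iff₀ (hs i)]
      have hsq : Real.sqrt (d i + 1) * Real.sqrt (d i + 1) = d i + 1 :=
        Real.mul_self_sqrt (hd1 i).le
      have h2 : d i ≤ r * (d i + 1) := (div_le_iff₀ (hd1 i)).mp (hrle i)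
      nlinarith
    have key : ∀ L i j, |(A1 ^ L) i j| ≤ Real.sqrt (d i + 1) * r ^ L / Real.sqrt (d j + 1) := by
      intro L
      induction L with
      | zero =>
        intro i j
        rcases eq_or_ne i j with h | h
        · subst h
          simp [Matrix.one_apply_eq, div_self (hs i).ne']
        · rw [pow_zero, Matrix.one_apply_ne h]
          simp only [abs_zero]
          positivity
      | succ L ih =>
        intro i j
        rw [pow_succ', Matrix.mul_apply]
        calc |∑ k, A1 i k * (A1 ^ L) k j|
            ≤ ∑ k, |A1 i k * (A1 ^ L) k j| := Finset.abs_sum_le_sum_abs _ _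
          _ ≤ ∑ k, |A1 i k| * (Real.sqrt (d k + 1) * r ^ L / Real.sqrt (d j + 1)) := by
              refine Finset.sum_le_sum fun k _ => ?_
              rw [abs_mul]
              exact mul_le_mul_of_nonneg_left (ih k j) (abs_nonneg _)
          _ = (∑ k, |A1 i k| * Real.sqrt (d k + 1)) * (r ^ L / Real.sqrt (d j + 1)) := by
              rw [Finset.sum_mul]
              exact Finset.sum_congr rfl fun k _ => by ring
          _ ≤ (r * Real.sqrt (d i + 1)) * (r ^ L / Real.sqrt (d j + 1)) :=
              mul_le_mul_of_nonneg_right (hrow i) (by positivity)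
          _ = Real.sqrt (d i + 1) * r ^ (L + 1) / Real.sqrt (d j + 1) := by ring
    refine tendsto_pi_nhds.mpr ?_
    intro i
    rw [tendsto_pi_nhds]
    intro j
    have hg : Tendsto (fun L : ℕ => Real.sqrt (d i + 1) * r ^ L / Real.sqrt (d j + 1))
        atTop (nhds 0) := by
      have := (tendsto_pow_atTop_nhds_zero_of_lt_one hr0 hr1).const_mul
        (Real.sqrt (d i + 1) / Real.sqrt (d j + 1))
      simpa [div_mul_eq_mul_div, mul_div_assoc, mul_comm] using this
    have h0 : ((0 : Matrix (Fin N) (Fin N) ℝ)) i j = 0 := rfl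
    rw [h0]
    refine squeeze_zero_norm (fun L => ?_) hg
    rw [Real.norm_eq_abs]
    exact key L i j
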